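/- Let p ∈ (2,4), a > 0, b > 0, μ > 0, σ > 0, and define g : (0,∞) → ℝ by g(t) = (a/2)σt² + (b/4)σ²t⁴ − (μ/p)σt^p. If t > 0 satisfies g'(t) = 0 and g''(t) < 0, then g(t) < ((p−2)a/(2p))·(8a/((p+2)(4−p)μ))^(2/(p−2))·σ. -/

import Mathlib

open Real Set

lemma core_ineq (q y : ℝ) (hq : 0 < q) (hy : 0 < y) :
    y ^ q * (q + 1 - q * y) ≤ 1 := by
  have hlog : Real.log y ≤ y - 1 := Real.log_le_sub_one_of_pos hy
  have h1 : q + 1 - q * y ≤ Real.exp (-(q * Real.log y)) := by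
    have := Real.add_one_le_exp (-(q * Real.log y))
    nlinarith [mul_le_mul_of_nonneg_left hlog hq.le]
  have h2 : y ^ q * (q + 1 - q * y) ≤ y ^ q * Real.exp (-(q * Real.log y)) :=
    mul_le_mul_of_nonneg_left h1 (Real.rpow_nonneg hy.le q)
  have h3 : y ^ q * Real.exp (-(q * Real.log y)) = 1 := by
    rw [Real.rpow_def_of_pos hy, ← Real.exp_add]
    simp [mul_comm]
  linarith [h2, h3.le, h3.ge]

lemma ratio_lt_two (p : ℝ) (hp2 : 2 < p) (hp4 : p < 4) :
    ((p + 2) / 4) ^ (2 / (p - 2)) < 2 := by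
  have hpos : (0:ℝ) < (p + 2) / 4 := by linarith
  have hq : (0:ℝ) < 2 / (p - 2) := by apply div_pos <;> linarith
  have hlog : Real.log ((p + 2) / 4) ≤ (p - 2) / 4 := by
    have := Real.log_le_sub_one_of_pos hpos
    linarith
  have hl2 : (0.6931471803 : ℝ) < Real.log 2 := Real.log_two_gt_d9
  have hkey : 2 / (p - 2) * Real.log ((p + 2) / 4) < Real.log 2 := by
    have h1 : 2 / (p - 2) * Real.log ((p + 2) / 4) ≤ 2 / (p - 2) * ((p - 2) / 4) :=
      mul_le_mul_of_nonneg_left hlog hq.le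
    have h2 : 2 / (p - 2) * ((p - 2) / 4) = 1 / 2 := by
      have : p - 2 ≠ 0 := by linarith
      field_simp
      norm_num
    linarith
  calc ((p + 2) / 4) ^ (2 / (p - 2)) = Real.exp (2 / (p - 2) * Real.log ((p + 2) / 4)) := by
        rw [Real.rpow_def_of_pos hpos, mul_comm]
      _ < Real.exp (Real.log 2) := Real.exp_lt_exp.mpr hkey
      _ = 2 := Real.exp_log (by norm_num)

set_option maxHeartbeats 800000 in
/-- For `p ∈ (2,4)`, `a, b, μ, σ > 0` and
`g t = (a/2)σt² + (b/4)σ²t⁴ − (μ/p)σt^p`, if `t > 0` satisfies `g'(t) = 0` and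
`g''(t) < 0`, then `g t < ((p−2)a/(2p))·(8a/((p+2)(4−p)μ))^(2/(p−2))·σ`. -/
theorem stmt_8 (p a b μ σ t : ℝ) (hp2 : 2 < p) (hp4 : p < 4)
    (ha : 0 < a) (hb : 0 < b) (hμ : 0 < μ) (hσ : 0 < σ) (ht : 0 < t)
    (h1 : deriv (fun s : ℝ => a / 2 * σ * s ^ 2 + b / 4 * σ ^ 2 * s ^ 4 - μ / p * σ * s ^ p) t = 0)
    (h2 : deriv (deriv (fun s : ℝ => a / 2 * σ * s ^ 2 + b / 4 * σ ^ 2 * s ^ 4 - μ / p * σ * s ^ p)) t < 0) :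
    a / 2 * σ * t ^ 2 + b / 4 * σ ^ 2 * t ^ 4 - μ / p * σ * t ^ p
      < (p - 2) * a / (2 * p) * (8 * a / ((p + 2) * (4 - p) * μ)) ^ (2 / (p - 2)) * σ := by
  have hp0 : (0:ℝ) < p := by linarith
  -- first derivative
  have key : ∀ s : ℝ, 0 < s →
      HasDerivAt (fun s : ℝ => a / 2 * σ * s ^ 2 + b / 4 * σ ^ 2 * s ^ 4 - μ / p * σ * s ^ p)
        (a * σ * s + b * σ ^ 2 * s ^ 3 - μ * σ * s ^ (p - 1)) s := by
    intro s hs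
    have hA : HasDerivAt (fun x : ℝ => a / 2 * σ * x ^ 2) (a * σ * s) s := by
      have := (hasDerivAt_pow 2 s).const_mul (a / 2 * σ)
      refine this.congr_deriv ?_
      push_cast; ring
    have hB : HasDerivAt (fun x : ℝ => b / 4 * σ ^ 2 * x ^ 4) (b * σ ^ 2 * s ^ 3) s := by
      have := (hasDerivAt_pow 4 s).const_mul (b / 4 * σ ^ 2)
      refine this.congr_deriv ?_
      push_cast; ring
    have hC : HasDerivAt (fun x : ℝ => μ / p * σ * x ^ p) (μ * σ * s ^ (p - 1)) s := by
      have := (Real.hasDerivAt_rpow_const (x := s) (p := p) (Or.inl hs.ne')).const_mul (μ / p * σ)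
      refine this.congr_deriv ?_
      field_simp
    exact (hA.add hB).sub hC
  -- second derivative
  have key2 : ∀ s : ℝ, 0 < s →
      HasDerivAt (fun x : ℝ => a * σ * x + b * σ ^ 2 * x ^ 3 - μ * σ * x ^ (p - 1))
        (a * σ + b * σ ^ 2 * (3 * s ^ 2) - μ * σ * ((p - 1) * s ^ (p - 2))) s := by
    intro s hs
    have hA : HasDerivAt (fun x : ℝ => a * σ * x) (a * σ) s := by
      have := (hasDerivAt_id s).const_mul (a * σ)
      refine this.congr_deriv ?_; ring
    have hB : HasDerivAt (fun x : ℝ => b * σ ^ 2 * x ^ 3) (b * σ ^ 2 * (3 * s ^ 2)) s := by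
      have := (hasDerivAt_pow 3 s).const_mul (b * σ ^ 2)
      refine this.congr_deriv ?_; norm_num
    have hC : HasDerivAt (fun x : ℝ => μ * σ * x ^ (p - 1)) (μ * σ * ((p - 1) * s ^ (p - 2))) s := by
      have := (Real.hasDerivAt_rpow_const (x := s) (p := p - 1) (Or.inl hs.ne')).const_mul (μ * σ)
      have he : p - 1 - 1 = p - 2 := by ring
      rw [he] at this
      convert this using 1
    exact (hA.add hB).sub hC
  rw [(key t ht).deriv] at h1
  have hev : deriv (fun s : ℝ => a / 2 * σ * s ^ 2 + b / 4 * σ ^ 2 * s ^ 4 - μ / p * σ * s ^ p)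
      =ᶠ[nhds t] (fun x : ℝ => a * σ * x + b * σ ^ 2 * x ^ 3 - μ * σ * x ^ (p - 1)) := by
    filter_upwards [Ioi_mem_nhds ht] with s hs
    exact (key s hs).deriv
  rw [hev.deriv_eq, (key2 t ht).deriv] at h2
  -- algebra
  set X : ℝ := t ^ (p - 2) with hXdef
  have hpm1 : t ^ (p - 1) = t * X := by
    rw [hXdef, show p - 1 = (p - 2) + 1 by ring, Real.rpow_add ht, Real.rpow_one]
    ring
  have htp : t ^ p = t ^ (2:ℕ) * X := by
    rw [hXdef, ← Real.rpow_natCast t 2, ← Real.rpow_add ht]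
    congr 1
    push_cast
    ring
  set x : ℝ := b * σ * t ^ 2 with hxdef
  have hx_pos : 0 < x := by positivity
  have hX : μ * X = a + x := by
    rw [hpm1] at h1
    have hσt : σ * t ≠ 0 := by positivity
    have h : σ * t * (a + x - μ * X) = 0 := by
      rw [hxdef]; linear_combination h1
    have := (mul_eq_zero.mp h).resolve_left hσt
    linarith
  have hX_pos : 0 < X := Real.rpow_pos_of_pos ht _
  -- from second derivative: (4-p)*x < (p-2)*a
  have hxlt : (4 - p) * x < (p - 2) * a := by
    have hXe : μ * σ * ((p - 1) * X) = σ * (p - 1) * (a + x) := by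
      rw [show μ * σ * ((p - 1) * X) = σ * (p - 1) * (μ * X) by ring, hX]
    rw [hXe] at h2
    nlinarith [h2, hσ]
  set q : ℝ := 2 / (p - 2) with hqdef
  have hq_pos : 0 < q := by apply div_pos <;> linarith
  have hXq : X ^ q = t ^ (2:ℕ) := by
    rw [hXdef, ← Real.rpow_natCast t 2, ← Real.rpow_mul ht.le]
    congr 1
    rw [hqdef]
    have : p - 2 ≠ 0 := by linarith
    field_simp
    norm_num
  set s : ℝ := a + x with hsdef
  have hs_pos : 0 < s := by positivity
  set sstar : ℝ := 2 * a / (4 - p) with hstardef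
  have h4p : (0:ℝ) < 4 - p := by linarith
  have hstar_pos : 0 < sstar := by positivity
  have hs_lt : s < sstar := by
    rw [hsdef, hstardef, lt_div_iff₀ h4p]
    nlinarith [hxlt]
  -- main single-variable maximization
  have hmain : s ^ q * (a * p - (4 - p) * s) ≤ sstar ^ q * (a * (p - 2)) := by
    set y : ℝ := s / sstar with hydef
    have hy_pos : 0 < y := div_pos hs_pos hstar_pos
    have hcore := core_ineq q y hq_pos hy_pos
    have hsq : s ^ q = sstar ^ q * y ^ q := by
      rw [hydef, ← Real.mul_rpow hstar_pos.le (div_nonneg hs_pos.le hstar_pos.le)]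
      congr 1
      field_simp
    have hbr : a * p - (4 - p) * s = a * (p - 2) * (q + 1 - q * y) := by
      rw [hydef, hqdef, hstardef]
      have h1 : p - 2 ≠ 0 := by linarith
      have h2 : (4:ℝ) - p ≠ 0 := by linarith
      have h3 : a ≠ 0 := ha.ne'
      field_simp
      ring
    rw [hsq, hbr]
    have hfac : (0:ℝ) ≤ sstar ^ q * (a * (p - 2)) :=
      mul_nonneg (Real.rpow_nonneg hstar_pos.le q) (by nlinarith)
    calc sstar ^ q * y ^ q * (a * (p - 2) * (q + 1 - q * y))
        = sstar ^ q * (a * (p - 2)) * (y ^ q * (q + 1 - q * y)) := by ring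
      _ ≤ sstar ^ q * (a * (p - 2)) * 1 := by
          exact mul_le_mul_of_nonneg_left hcore hfac
      _ = sstar ^ q * (a * (p - 2)) := by ring
  -- threshold comparison
  set T : ℝ := 8 * a / ((p + 2) * (4 - p)) with hTdef
  clear_value X x q s sstar T
  have hT_pos : 0 < T := by
    rw [hTdef]
    exact div_pos (by linarith) (mul_pos (by linarith) (by linarith))
  have hstarT : sstar = ((p + 2) / 4) * T := by
    rw [hstardef, hTdef]
    have h2 : (4:ℝ) - p ≠ 0 := by linarith
    have h3 : (p:ℝ) + 2 ≠ 0 := by linarith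
    field_simp
    ring
  have hstar_lt : sstar ^ q < 2 * T ^ q := by
    rw [hstarT, Real.mul_rpow (by linarith : (0:ℝ) ≤ (p + 2) / 4) hT_pos.le]
    have hr := ratio_lt_two p hp2 hp4
    rw [← hqdef] at hr
    have hTq : 0 < T ^ q := Real.rpow_pos_of_pos hT_pos q
    exact mul_lt_mul_of_pos_right hr hTq
  -- assemble
  have hXs : X = s / μ := by
    rw [eq_div_iff hμ.ne']
    linear_combination hX
  have ht2 : t ^ (2:ℕ) = s ^ q / μ ^ q := by
    rw [← hXq, hXs, Real.div_rpow hs_pos.le hμ.le]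
  have hbase : 8 * a / ((p + 2) * (4 - p) * μ) = T / μ := by
    rw [hTdef]; field_simp
  have hX' := hX
  rw [hsdef, hxdef] at hX' 
  have hLHS : a / 2 * σ * t ^ 2 + b / 4 * σ ^ 2 * t ^ 4 - μ / p * σ * t ^ p
      = σ * t ^ 2 * (a * p - (4 - p) * s) / (4 * p) := by
    rw [htp, hsdef, hxdef]
    have hpne : p ≠ 0 := hp0.ne'
    field_simp
    linear_combination (-8) * hX' 
  rw [hLHS, hbase, Real.div_rpow hT_pos.le hμ.le]
  have hμq : 0 < μ ^ q := Real.rpow_pos_of_pos hμ q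
  have hstep1 : σ * t ^ 2 * (a * p - (4 - p) * s) / (4 * p)
      ≤ σ * (sstar ^ q * (a * (p - 2))) / (μ ^ q * (4 * p)) := by
    have hLe : σ * t ^ 2 * (a * p - (4 - p) * s) / (4 * p)
        = σ * (s ^ q * (a * p - (4 - p) * s)) / (μ ^ q * (4 * p)) := by
      rw [ht2]
      field_simp
    rw [hLe, div_le_div_iff₀ (by positivity) (by positivity)]
    have hD : (0:ℝ) < μ ^ q * (4 * p) := by positivity
    nlinarith [mul_le_mul_of_nonneg_right (mul_le_mul_of_nonneg_left hmain hσ.le) hD.le]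
  have hstep2 : σ * (sstar ^ q * (a * (p - 2))) / (μ ^ q * (4 * p))
      < (p - 2) * a / (2 * p) * (T ^ q / μ ^ q) * σ := by
    rw [div_lt_iff₀ (by positivity)]
    have hc : (0:ℝ) < σ * (a * (p - 2)) := mul_pos hσ (mul_pos ha (by linarith))
    have := mul_lt_mul_of_pos_left hstar_lt hc
    have heq : (p - 2) * a / (2 * p) * (T ^ q / μ ^ q) * σ * (μ ^ q * (4 * p))
        = σ * (a * (p - 2)) * (2 * T ^ q) := by
      field_simp
      ring
    rw [heq]
    nlinarith [this]
  calc σ * t ^ 2 * (a * p - (4 - p) * s) / (4 * p)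
      ≤ σ * (sstar ^ q * (a * (p - 2))) / (μ ^ q * (4 * p)) := hstep1
    _ < (p - 2) * a / (2 * p) * (T ^ q / μ ^ q) * σ := hstep2
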